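/- Let m ≥ 4 be an integer with 3 ∤ m. No nonzero linear combination over a field of characteristic 0 of the six monomials x^{m−1}y⁵z^{3m−2}, x^{4m−2}y⁴z^{m−1}, x^{2m−1}y²z^{4m−2}, x^{5m−2}yz^{2m−1}, x^{8m−3}, z^{7m−3} has all six second-order partial derivatives vanishing at the point (1,1,1). -/
import Mathlib


open MvPolynomial

/-- The exponent triples of the six monomials. -/
def expTriples (m : ℕ) : Fin 6 → ℕ × ℕ × ℕ :=
  ![(m - 1, 5, 3 * m - 2), (4 * m - 2, 4, m - 1), (2 * m - 1, 2, 4 * m - 2),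
    (5 * m - 2, 1, 2 * m - 1), (8 * m - 3, 0, 0), (0, 0, 7 * m - 3)]

/-- The six monomials `x^{m−1}y⁵z^{3m−2}, …, z^{7m−3}` in `k[x,y,z]`. -/
noncomputable def sixMonomials (k : Type*) [Field k] (m : ℕ) (r : Fin 6) :
    MvPolynomial (Fin 3) k :=
  X 0 ^ (expTriples m r).1 * X 1 ^ (expTriples m r).2.1 * X 2 ^ (expTriples m r).2.2

section aux

variable {k : Type*} [Field k]

lemma L01 (u : k) (a b d : ℕ) :
    eval (fun _ => (1:k)) (pderiv 0 (pderiv (1 : Fin 3) (C u * (X 0^a * X 1^b * X 2^d)))) = u * (a*b : ℕ) := by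
  simp [pderiv_mul, pderiv_pow, pderiv_X_self, pderiv_X_of_ne] <;> exact Or.inl (mul_comm _ _)

lemma L02 (u : k) (a b d : ℕ) :
    eval (fun _ => (1:k)) (pderiv 0 (pderiv (2 : Fin 3) (C u * (X 0^a * X 1^b * X 2^d)))) = u * (a*d : ℕ) := by
  simp [pderiv_mul, pderiv_pow, pderiv_X_self, pderiv_X_of_ne] <;> exact Or.inl (mul_comm _ _)

lemma L12 (u : k) (a b d : ℕ) :
    eval (fun _ => (1:k)) (pderiv 1 (pderiv (2 : Fin 3) (C u * (X 0^a * X 1^b * X 2^d)))) = u * (b*d : ℕ) := by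
  simp [pderiv_mul, pderiv_pow, pderiv_X_self, pderiv_X_of_ne] <;> exact Or.inl (mul_comm _ _)

lemma L00 (u : k) (a b d : ℕ) :
    eval (fun _ => (1:k)) (pderiv 0 (pderiv (0 : Fin 3) (C u * (X 0^a * X 1^b * X 2^d)))) = u * (a*(a-1) : ℕ) := by
  rcases a with _ | n
  · simp
  · simp [pderiv_mul, pderiv_pow, pderiv_X_self, pderiv_X_of_ne]

lemma L11 (u : k) (a b d : ℕ) :
    eval (fun _ => (1:k)) (pderiv 1 (pderiv (1 : Fin 3) (C u * (X 0^a * X 1^b * X 2^d)))) = u * (b*(b-1) : ℕ) := by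
  rcases b with _ | n
  · simp
  · simp [pderiv_mul, pderiv_pow, pderiv_X_self, pderiv_X_of_ne]

lemma L22 (u : k) (a b d : ℕ) :
    eval (fun _ => (1:k)) (pderiv 2 (pderiv (2 : Fin 3) (C u * (X 0^a * X 1^b * X 2^d)))) = u * (d*(d-1) : ℕ) := by
  rcases d with _ | n
  · simp
  · simp [pderiv_mul, pderiv_pow, pderiv_X_self, pderiv_X_of_ne]

end aux

/-- Over a field of characteristic 0, no nonzero linear combination of the six monomials has
all six second-order partial derivatives vanishing at `(1,1,1)` (for `m ≥ 4`, `3 ∤ m`). -/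
theorem stmt9 (k : Type*) [Field k] [CharZero k] (m : ℕ) (hm : 4 ≤ m) (h3 : ¬ (3 ∣ m))
    (c : Fin 6 → k) (hc : c ≠ 0) :
    ¬ (∀ s t : Fin 3,
        eval (fun _ => (1 : k))
          (pderiv s (pderiv t (∑ r : Fin 6, C (c r) * sixMonomials k m r))) = 0) := by
  intro h
  clear h3
  have hsum : (∑ r : Fin 6, C (c r) * sixMonomials k m r) =
      C (c 0) * (X 0 ^ (m-1) * X 1 ^ 5 * X 2 ^ (3*m-2))
      + C (c 1) * (X 0 ^ (4*m-2) * X 1 ^ 4 * X 2 ^ (m-1))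
      + C (c 2) * (X 0 ^ (2*m-1) * X 1 ^ 2 * X 2 ^ (4*m-2))
      + C (c 3) * (X 0 ^ (5*m-2) * X 1 ^ 1 * X 2 ^ (2*m-1))
      + C (c 4) * (X 0 ^ (8*m-3) * X 1 ^ 0 * X 2 ^ 0)
      + C (c 5) * (X 0 ^ 0 * X 1 ^ 0 * X 2 ^ (7*m-3)) := by
    have t0 : expTriples m 0 = (m-1, 5, 3*m-2) := rfl
    have t1 : expTriples m 1 = (4*m-2, 4, m-1) := rfl
    have t2 : expTriples m 2 = (2*m-1, 2, 4*m-2) := rfl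
    have t3 : expTriples m 3 = (5*m-2, 1, 2*m-1) := rfl
    have t4 : expTriples m 4 = (8*m-3, 0, 0) := rfl
    have t5 : expTriples m 5 = (0, 0, 7*m-3) := rfl
    simp [Fin.sum_univ_six, sixMonomials, t0, t1, t2, t3, t4, t5]
  have H01 := h 0 1
  have H02 := h 0 2
  have H11 := h 1 1
  have H12 := h 1 2
  have H00 := h 0 0
  have H22 := h 2 2
  rw [hsum] at H01 H02 H11 H12 H00 H22
  simp only [map_add, L01] at H01
  simp only [map_add, L02] at H02
  simp only [map_add, L11] at H11
  simp only [map_add, L12] at H12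
  simp only [map_add, L00] at H00
  simp only [map_add, L22] at H22
  push_cast [Nat.cast_sub (show 1 ≤ m by omega), Nat.cast_sub (show 2 ≤ 3*m by omega),
    Nat.cast_sub (show 2 ≤ 4*m by omega), Nat.cast_sub (show 1 ≤ 2*m by omega),
    Nat.cast_sub (show 2 ≤ 5*m by omega), Nat.cast_sub (show 3 ≤ 8*m by omega),
    Nat.cast_sub (show 3 ≤ 7*m by omega),
    Nat.cast_sub (show 1 ≤ m - 1 by omega), Nat.cast_sub (show 1 ≤ 4*m-2 by omega),
    Nat.cast_sub (show 1 ≤ 2*m-1 by omega), Nat.cast_sub (show 1 ≤ 5*m-2 by omega),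
    Nat.cast_sub (show 1 ≤ 8*m-3 by omega), Nat.cast_sub (show 1 ≤ 3*m-2 by omega),
    Nat.cast_sub (show 1 ≤ 7*m-3 by omega)] at H01 H02 H11 H12 H00 H22
  set x : k := (m : k) with hx
  -- the determinant of the 4×4 core system
  have hDcast : (-11424*x^4 + 18812*x^3 - 11592*x^2 + 3168*x - 324 : k)
      = -(((11424*(m:ℤ)^4 - 18812*(m:ℤ)^3 + 11592*(m:ℤ)^2 - 3168*(m:ℤ) + 324 : ℤ) : k)) := by
    push_cast
    ring
  have hmZ : (4 : ℤ) ≤ (m : ℤ) := by exact_mod_cast hm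
  have hNpos : 0 < (11424*(m:ℤ)^4 - 18812*(m:ℤ)^3 + 11592*(m:ℤ)^2 - 3168*(m:ℤ) + 324 : ℤ) := by
    nlinarith [hmZ, sq_nonneg ((m:ℤ) - 4), sq_nonneg (m:ℤ), mul_pos (mul_pos (by linarith : (0:ℤ) < (m:ℤ)) (by linarith : (0:ℤ) < (m:ℤ))) (by linarith : (0:ℤ) < (m:ℤ))]
  have hD : (-11424*x^4 + 18812*x^3 - 11592*x^2 + 3168*x - 324 : k) ≠ 0 := by
    rw [hDcast, neg_ne_zero]
    exact_mod_cast hNpos.ne'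
  have hc0 : (-11424*x^4 + 18812*x^3 - 11592*x^2 + 3168*x - 324 : k) * c 0 = 0 := by
    linear_combination (704*x^3 - 936*x^2 + 412*x - 60) * H01
      + (-408*x^2 + 344*x - 72) * H02
      + (-896*x^4 + 1616*x^3 - 1088*x^2 + 324*x - 36) * H11
      + (280*x^3 - 372*x^2 + 164*x - 24) * H12
  have hc1 : (-11424*x^4 + 18812*x^3 - 11592*x^2 + 3168*x - 324 : k) * c 1 = 0 := by
    linear_combination (-992*x^3 + 1316*x^2 - 578*x + 84) * H01
      + (510*x^2 - 430*x + 90) * H02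
      + (224*x^4 - 516*x^3 + 418*x^2 - 144*x + 18) * H11
      + (-70*x^3 + 128*x^2 - 70*x + 12) * H12
  have hc2 : (-11424*x^4 + 18812*x^3 - 11592*x^2 + 3168*x - 324 : k) * c 2 = 0 := by
    linear_combination (-1088*x^3 + 1464*x^2 - 652*x + 96) * H01
      + (1020*x^2 - 860*x + 180) * H02
      + (1904*x^4 - 3658*x^3 + 2576*x^2 - 792*x + 90) * H11
      + (-2380*x^3 + 2952*x^2 - 1220*x + 168) * H12
  have hc3 : (-11424*x^4 + 18812*x^3 - 11592*x^2 + 3168*x - 324 : k) * c 3 = 0 := by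
    linear_combination (1056*x^3 - 1580*x^2 + 764*x - 120) * H01
      + (-2040*x^2 + 1720*x - 360) * H02
      + (-1344*x^4 + 2648*x^3 - 1924*x^2 + 612*x - 72) * H11
      + (1848*x^3 - 2444*x^2 + 1072*x - 156) * H12
  have e0 : c 0 = 0 := (mul_eq_zero.mp hc0).resolve_left hD
  have e1 : c 1 = 0 := (mul_eq_zero.mp hc1).resolve_left hD
  have e2 : c 2 = 0 := (mul_eq_zero.mp hc2).resolve_left hD
  have e3 : c 3 = 0 := (mul_eq_zero.mp hc3).resolve_left hD
  -- now use xx equation for c4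
  have hc4 : ((8*x-3)*(8*x-4) : k) * c 4 = 0 := by
    linear_combination H00 - ((x-1)*(x-2)) * e0 - ((4*x-2)*(4*x-3)) * e1
      - ((2*x-1)*(2*x-2)) * e2 - ((5*x-2)*(5*x-3)) * e3
  have h83 : ((8*x-3) : k) ≠ 0 := by
    have : ((8*m-3 : ℕ) : k) ≠ 0 := Nat.cast_ne_zero.mpr (by omega)
    rwa [Nat.cast_sub (show 3 ≤ 8*m by omega), Nat.cast_mul] at this
  have h84 : ((8*x-4) : k) ≠ 0 := by
    have : ((8*m-4 : ℕ) : k) ≠ 0 := Nat.cast_ne_zero.mpr (by omega)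
    rwa [Nat.cast_sub (show 4 ≤ 8*m by omega), Nat.cast_mul] at this
  have e4 : c 4 = 0 := by
    rcases mul_eq_zero.mp hc4 with h' | h'
    · exact absurd h' (mul_ne_zero h83 h84)
    · exact h'
  have hc5 : ((7*x-3)*(7*x-4) : k) * c 5 = 0 := by
    linear_combination H22 - ((3*x-2)*(3*x-3)) * e0 - ((x-1)*(x-2)) * e1
      - ((4*x-2)*(4*x-3)) * e2 - ((2*x-1)*(2*x-2)) * e3
  have h73 : ((7*x-3) : k) ≠ 0 := by
    have : ((7*m-3 : ℕ) : k) ≠ 0 := Nat.cast_ne_zero.mpr (by omega)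
    rwa [Nat.cast_sub (show 3 ≤ 7*m by omega), Nat.cast_mul] at this
  have h74 : ((7*x-4) : k) ≠ 0 := by
    have : ((7*m-4 : ℕ) : k) ≠ 0 := Nat.cast_ne_zero.mpr (by omega)
    rwa [Nat.cast_sub (show 4 ≤ 7*m by omega), Nat.cast_mul] at this
  have e5 : c 5 = 0 := by
    rcases mul_eq_zero.mp hc5 with h' | h'
    · exact absurd h' (mul_ne_zero h73 h74)
    · exact h'
  apply hc
  funext i
  fin_cases i <;> simpa using by assumption
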